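/- For n ≥ 5, with G₁ = {M ∈ M_n(ℤ) : M·𝟙 = 0, Mᵀ = M}, G₂ = {M : M·𝟙 = 0, Mᵀ = -M}, and G₃ = {M : M·𝟙 = 0, Mᵀ = M, tr(M) = 0}, every element of 2·G₃ lies in the ℤ-span of the commutators ⟨A, B⟩ = AB - BA with A ∈ G₁ and B ∈ G₂. -/

import Mathlib

open Matrix

/-- `X_{ij} = E_{ii} + E_{jj} - E_{ij} - E_{ji}`. -/
def Xmat (n : ℕ) (i j : Fin n) : Matrix (Fin n) (Fin n) ℤ :=
  Matrix.single i i 1 + Matrix.single j j 1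
    - Matrix.single i j 1 - Matrix.single j i 1

/-- `Y_{ijk} = (E_{ij} - E_{ji}) - (E_{ik} - E_{ki}) + (E_{jk} - E_{kj})`. -/
def Ymat (n : ℕ) (i j k : Fin n) : Matrix (Fin n) (Fin n) ℤ :=
  (Matrix.single i j 1 - Matrix.single j i 1)
    - (Matrix.single i k 1 - Matrix.single k i 1)
    + (Matrix.single j k 1 - Matrix.single k j 1)

section Helpers

variable {n : ℕ}

lemma std_transpose (a b : Fin n) (c : ℤ) :
    (Matrix.single a b c)ᵀ = Matrix.single b a c := by
  ext i j
  simp [Matrix.single, and_comm]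

lemma std_mulVec_one (a b : Fin n) :
    (Matrix.single a b (1:ℤ)).mulVec (fun _ => 1) =
      Function.update (0 : Fin n → ℤ) a 1 := by
  rw [Matrix.single_mulVec]
  simp

lemma Xmat_mem (a b : Fin n) :
    (Xmat n a b).mulVec (fun _ => 1) = 0 ∧ (Xmat n a b)ᵀ = Xmat n a b := by
  constructor
  · simp only [Xmat, Matrix.add_mulVec, Matrix.sub_mulVec, std_mulVec_one]
    abel
  · simp only [Xmat, Matrix.transpose_add, Matrix.transpose_sub, std_transpose]
    abel

lemma Ymat_mem (a b c : Fin n) :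
    (Ymat n a b c).mulVec (fun _ => 1) = 0 ∧ (Ymat n a b c)ᵀ = -(Ymat n a b c) := by
  constructor
  · simp only [Ymat, Matrix.add_mulVec, Matrix.sub_mulVec, std_mulVec_one]
    abel
  · simp only [Ymat, Matrix.transpose_add, Matrix.transpose_sub, std_transpose]
    abel

lemma Xmat_symm (a b : Fin n) : Xmat n a b = Xmat n b a := by
  simp only [Xmat]; abel

lemma Xmat_self (a : Fin n) : Xmat n a a = 0 := by
  simp only [Xmat]; abel

lemma bracket_XY (i j k : Fin n) (hij : i ≠ j) (hik : i ≠ k) (hjk : j ≠ k) :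
    Xmat n i j * Ymat n i j k - Ymat n i j k * Xmat n i j
      = 2 • (Xmat n i k - Xmat n j k) := by
  simp only [Xmat, Ymat, Matrix.add_mul, Matrix.sub_mul, Matrix.mul_add, Matrix.mul_sub,
    Matrix.single_mul_single_same,
    Matrix.single_mul_single_of_ne _ _ _ _ hij, Matrix.single_mul_single_of_ne _ _ _ _ hij.symm,
    Matrix.single_mul_single_of_ne _ _ _ _ hik, Matrix.single_mul_single_of_ne _ _ _ _ hik.symm,
    Matrix.single_mul_single_of_ne _ _ _ _ hjk, Matrix.single_mul_single_of_ne _ _ _ _ hjk.symm,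
    mul_one, smul_sub, two_smul]
  abel

lemma decomp (M : Matrix (Fin n) (Fin n) ℤ)
    (h1 : M.mulVec (fun _ => 1) = 0) (h2 : Mᵀ = M) :
    ∑ a : Fin n, ∑ b : Fin n, (-(M a b)) • Xmat n a b = 2 • M := by
  have hrow : ∀ r : Fin n, ∑ s, M r s = 0 := by
    intro r; have := congrFun h1 r
    simpa [Matrix.mulVec, dotProduct] using this
  have hsym : ∀ a b, M b a = M a b := fun a b => (congrFun (congrFun h2 b) a).symm
  ext i j
  simp only [Matrix.sum_apply, Matrix.smul_apply, Xmat, Matrix.add_apply, Matrix.sub_apply,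
    Matrix.single, Matrix.of_apply, smul_eq_mul, mul_add, mul_sub, mul_ite, mul_one,
    mul_zero, Finset.sum_add_distrib, Finset.sum_sub_distrib, ite_and,
    Finset.sum_ite_irrel, Finset.sum_ite_eq, Finset.sum_ite_eq', Finset.sum_const_zero,
    Finset.mem_univ, if_true, Finset.sum_neg_distrib, hrow, hsym]
  by_cases h : i = j <;> simp [h, hrow, hsym, two_mul]

end Helpers

/-- For `n ≥ 5`, every element of `2·G₃` lies in the ℤ-span of brackets `⟨A,B⟩`
with `A ∈ G₁` and `B ∈ G₂`. -/
theorem two_G3_le_bracket_G1_G2 (n : ℕ) (hn : 5 ≤ n) (M : Matrix (Fin n) (Fin n) ℤ)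
    (h1 : M.mulVec (fun _ => 1) = 0) (h2 : Mᵀ = M) (h3 : M.trace = 0) :
    2 • M ∈ Submodule.span ℤ
      {C | ∃ A B : Matrix (Fin n) (Fin n) ℤ,
        (A.mulVec (fun _ => 1) = 0 ∧ Aᵀ = A) ∧
        (B.mulVec (fun _ => 1) = 0 ∧ Bᵀ = -B) ∧
        C = A * B - B * A} := by
  set S : Set (Matrix (Fin n) (Fin n) ℤ) :=
    {C | ∃ A B : Matrix (Fin n) (Fin n) ℤ,
        (A.mulVec (fun _ => 1) = 0 ∧ Aᵀ = A) ∧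
        (B.mulVec (fun _ => 1) = 0 ∧ Bᵀ = -B) ∧
        C = A * B - B * A} with hS
  -- the base generators
  have hbase : ∀ i j k : Fin n, i ≠ j → i ≠ k → j ≠ k →
      2 • (Xmat n i k - Xmat n j k) ∈ Submodule.span ℤ S := by
    intro i j k hij hik hjk
    apply Submodule.subset_span
    exact ⟨Xmat n i j, Ymat n i j k, ⟨(Xmat_mem i j).1, (Xmat_mem i j).2⟩,
      ⟨(Ymat_mem i j k).1, (Ymat_mem i j k).2⟩, (bracket_XY i j k hij hik hjk).symm⟩
  -- all differences of X's
  have hL : ∀ a b c d : Fin n, a ≠ b → c ≠ d →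
      2 • (Xmat n a b - Xmat n c d) ∈ Submodule.span ℤ S := by
    intro a b c d hab hcd
    by_cases h1' : b = d
    · subst h1'
      by_cases h2' : a = c
      · subst h2'; simp
      · exact hbase a c b h2' hab hcd
    · by_cases h2' : a = c
      · subst h2'
        rw [show Xmat n a b = Xmat n b a from Xmat_symm _ _,
          show Xmat n a d = Xmat n d a from Xmat_symm _ _]
        exact hbase b d a h1' hab.symm hcd.symm
      · by_cases h3' : a = d
        · subst h3'
          by_cases h4' : b = c
          · subst h4'
            rw [Xmat_symm]; simp
          · rw [show Xmat n a b = Xmat n b a from Xmat_symm _ _]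
            exact hbase b c a h4' hab.symm hcd
        · by_cases h4' : b = c
          · subst h4'
            rw [show Xmat n b d = Xmat n d b from Xmat_symm _ _]
            exact hbase a d b h3' hab hcd.symm
          · have hsplit : 2 • (Xmat n a b - Xmat n c d)
                = 2 • (Xmat n a b - Xmat n c b) + 2 • (Xmat n c b - Xmat n c d) := by
              rw [← smul_add, sub_add_sub_cancel]
            rw [hsplit]
            refine add_mem (hbase a c b h2' hab (Ne.symm h4')) ?_
            rw [show Xmat n c b = Xmat n b c from Xmat_symm _ _,
              show Xmat n c d = Xmat n d c from Xmat_symm _ _]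
            exact hbase b d c h1' h4' (Ne.symm hcd)
  -- basic facts about M
  have hrow : ∀ r : Fin n, ∑ s, M r s = 0 := by
    intro r; have := congrFun h1 r
    simpa [Matrix.mulVec, dotProduct] using this
  have hsym : ∀ a b, M b a = M a b := fun a b => (congrFun (congrFun h2 b) a).symm
  have htr : ∑ a : Fin n, M a a = 0 := by simpa [Matrix.trace, Matrix.diag] using h3
  -- reference pair
  set p0 : Fin n := ⟨0, by omega⟩ with hp0
  set q0 : Fin n := ⟨1, by omega⟩ with hq0
  have hpq : p0 ≠ q0 := by simp [hp0, hq0, Fin.ext_iff]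
  set X0 : Matrix (Fin n) (Fin n) ℤ := Xmat n p0 q0 with hX0
  -- the key rewriting of 2 • M
  set f : Fin n × Fin n → Matrix (Fin n) (Fin n) ℤ :=
    fun p => (-(M p.1 p.2)) • (Xmat n p.1 p.2 - X0) with hf
  have csum : ∑ a : Fin n, ∑ b : Fin n, (-(M a b)) = 0 := by
    simp [hrow]
  have key : 2 • M = ∑ p : Fin n × Fin n, f p := by
    rw [Fintype.sum_prod_type]
    simp only [hf, smul_sub]
    rw [Finset.sum_congr rfl (fun a _ => Finset.sum_sub_distrib _ _), Finset.sum_sub_distrib]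
    simp only [← Finset.sum_smul]
    rw [csum, zero_smul, sub_zero, decomp M h1 h2]
  rw [key]
  -- split the sum into strict lower / diagonal / strict upper parts
  have hsplit2 : ∑ p : Fin n × Fin n, f p
      = (∑ p ∈ Finset.univ.filter (fun p : Fin n × Fin n => p.1 < p.2), f p)
        + ((∑ p ∈ Finset.univ.filter (fun p : Fin n × Fin n => p.1 = p.2), f p)
        + (∑ p ∈ Finset.univ.filter (fun p : Fin n × Fin n => p.2 < p.1), f p)) := by
    rw [← Finset.sum_filter_add_sum_filter_not Finset.univ (fun p : Fin n × Fin n => p.1 < p.2) f]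
    congr 1
    rw [← Finset.sum_filter_add_sum_filter_not
      (Finset.univ.filter (fun p : Fin n × Fin n => ¬ p.1 < p.2))
      (fun p : Fin n × Fin n => p.1 = p.2) f]
    congr 1
    · apply Finset.sum_congr _ (fun _ _ => rfl)
      ext p
      simp only [Finset.mem_filter, Finset.mem_univ, true_and]
      constructor
      · rintro ⟨_, h⟩; exact h
      · intro h; exact ⟨by rw [h]; exact lt_irrefl _, h⟩
    · apply Finset.sum_congr _ (fun _ _ => rfl)
      ext p
      simp only [Finset.mem_filter, Finset.mem_univ, true_and]
      constructor
      · rintro ⟨hnl, hne⟩; exact (not_lt.mp hnl).lt_of_ne (fun e => hne e.symm)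
      · intro h; exact ⟨lt_asymm h, h.ne'⟩
  have hdiag : ∑ p ∈ Finset.univ.filter (fun p : Fin n × Fin n => p.1 = p.2), f p = 0 := by
    rw [Finset.sum_filter, Fintype.sum_prod_type]
    simp only [Finset.sum_ite_eq, Finset.mem_univ, if_true]
    simp only [hf, Xmat_self, zero_sub, smul_neg, neg_smul, neg_neg]
    rw [← Finset.sum_smul, htr, zero_smul]
  have hswap : ∑ p ∈ Finset.univ.filter (fun p : Fin n × Fin n => p.2 < p.1), f p
      = ∑ p ∈ Finset.univ.filter (fun p : Fin n × Fin n => p.1 < p.2), f p := by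
    refine Finset.sum_equiv (Equiv.prodComm (Fin n) (Fin n)) ?_ ?_
    · intro p; simp [Equiv.prodComm]
    · intro p hp
      simp only [hf, Equiv.prodComm_apply, Prod.fst_swap, Prod.snd_swap]
      rw [hsym p.1 p.2, Xmat_symm]
  rw [hsplit2, hdiag, zero_add, hswap, ← Finset.sum_add_distrib]
  refine Submodule.sum_mem _ fun p hp => ?_
  have hlt : p.1 < p.2 := (Finset.mem_filter.mp hp).2
  rw [← two_smul ℕ]
  simp only [hf]
  rw [smul_comm]
  exact Submodule.smul_mem _ _ (hL p.1 p.2 p0 q0 (ne_of_lt hlt) hpq)
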